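/- In the paint shop model, a greedy retrieval followed by an optimal continuation loses nothing: if lane a's front car has color equal to the current downstream color p in state s, then r(s, a) = 1 and the state s' after retrieving from lane a satisfies that the maximum cumulative reward from s equals 1 plus the maximum cumulative reward from s'. In particular, exchanging any first action of an optimal sequence with the greedy retrieval (and appropriately permuting the remaining actions) does not decrease cumulative reward. -/

import Mathlib

/-- A state of the paint shop buffer system: the remaining upstream sequence,
`L` FIFO buffer lanes (head of each list = front/rightmost car, retrieved first),
and the downstream sequence produced so far. -/
structure PSState (L W : ℕ) where
  upstream : List ℕ
  buffer : Fin L → List ℕ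
  downstream : List ℕ

namespace PS

/-- Actions: store the front upstream car into a lane, or retrieve the front car of a lane. -/
inductive Action (L : ℕ) where
  | store (lane : Fin L)
  | retrieve (lane : Fin L)
  deriving DecidableEq

variable {L W : ℕ}

/-- Validity of an action in a state. -/
def Valid (s : PSState L W) : Action L → Prop
  | Action.store a => s.upstream ≠ [] ∧ (s.buffer a).length < W
  | Action.retrieve a => s.buffer a ≠ []

/-- Transition function; invalid actions leave the state unchanged. -/
def step (s : PSState L W) : Action L → PSState L W
  | Action.store a =>
      if s.upstream ≠ [] ∧ (s.buffer a).length < W then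
        { s with upstream := s.upstream.tail,
                 buffer := Function.update s.buffer a (s.buffer a ++ s.upstream.take 1) }
      else s
  | Action.retrieve a =>
      match s.buffer a with
      | [] => s
      | c :: rest =>
          { s with buffer := Function.update s.buffer a rest,
                   downstream := s.downstream ++ [c] }

/-- Run a sequence of actions from a state. -/
def run (s : PSState L W) (acts : List (Action L)) : PSState L W :=
  acts.foldl step s

/-- A sequence of actions is feasible from a state if every action is valid when performed. -/
def Feasible (s : PSState L W) : List (Action L) → Prop
  | [] => True
  | a :: rest => Valid s a ∧ Feasible (step s a) rest

/-- A sequence of actions is complete if afterwards the upstream sequence and buffer are empty. -/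
def Complete (s : PSState L W) (acts : List (Action L)) : Prop :=
  (run s acts).upstream = [] ∧ ∀ a, (run s acts).buffer a = []

/-- Initial state for upstream sequence `c` with empty buffer and empty downstream sequence. -/
def init (L W : ℕ) (c : List ℕ) : PSState L W :=
  ⟨c, fun _ => [], []⟩

/-- Reward function: 1 for a retrieval matching the current downstream color,
0 for a retrieval causing a color change, 0 for a valid store, −10 for invalid actions. -/
def reward (s : PSState L W) : Action L → ℤ
  | Action.store a =>
      if s.upstream ≠ [] ∧ (s.buffer a).length < W then 0 else -10
  | Action.retrieve a =>
      match s.buffer a with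
      | [] => -10
      | c :: _ => if s.downstream.getLast? = some c then 1 else 0

/-- Cumulative reward of an action sequence. -/
def cumReward (s : PSState L W) : List (Action L) → ℤ
  | [] => 0
  | a :: rest => reward s a + cumReward (step s a) rest

/-- Number of color changes (adjacent unequal pairs) in a sequence of colors. -/
def colorChanges : List ℕ → ℕ
  | a :: b :: t => (if a = b then 0 else 1) + colorChanges (b :: t)
  | _ => 0

def Action.isStore : Action L → Bool
  | Action.store _ => true
  | Action.retrieve _ => false

def Action.isRetrieve : Action L → Bool
  | Action.store _ => false
  | Action.retrieve _ => true

/-- The buffer is completely full. -/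
def BufferFull (s : PSState L W) : Prop := ∀ a, (s.buffer a).length = W

/-- The buffer is completely empty. -/
def BufferEmpty (s : PSState L W) : Prop := ∀ a, s.buffer a = []

/-- The state reached after performing the first `n` actions of a schedule. -/
def stateAt (s : PSState L W) (acts : List (Action L)) (n : ℕ) : PSState L W :=
  run s (acts.take n)

/-- A schedule follows the store-then-retrieve discipline: it alternates maximal phases,
storing until the buffer is full (or upstream is empty), then retrieving until the
buffer is empty. Equivalently, at every switch from a store action to a retrieve action
the buffer is full or upstream empty, and at every switch from retrieve to store the
buffer is empty. -/
def StoreThenRetrieve (s : PSState L W) (acts : List (Action L)) : Prop :=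
  ∀ i : ℕ, ∀ x y : Action L, acts[i]? = some x → acts[i+1]? = some y →
    (x.isStore = true → y.isRetrieve = true →
      BufferFull (stateAt s acts (i+1)) ∨ (stateAt s acts (i+1)).upstream = []) ∧
    (x.isRetrieve = true → y.isStore = true → BufferEmpty (stateAt s acts (i+1)))

end PS

namespace PS

variable {L W : ℕ}

-- ### basic step lemmas

lemma step_store {s : PSState L W} {b : Fin L} (h : s.upstream ≠ [] ∧ (s.buffer b).length < W) :
    step s (Action.store b) =
      { s with upstream := s.upstream.tail,
               buffer := Function.update s.buffer b (s.buffer b ++ s.upstream.take 1) } := by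
  simp [step, h]

lemma step_store_not {s : PSState L W} {b : Fin L}
    (h : ¬ (s.upstream ≠ [] ∧ (s.buffer b).length < W)) :
    step s (Action.store b) = s := by
  simp only [step, if_neg h]

lemma step_retrieve {s : PSState L W} {b : Fin L} {c : ℕ} {rest : List ℕ}
    (h : s.buffer b = c :: rest) :
    step s (Action.retrieve b) =
      { s with buffer := Function.update s.buffer b rest,
               downstream := s.downstream ++ [c] } := by
  simp only [step, h]

lemma step_retrieve_nil {s : PSState L W} {b : Fin L} (h : s.buffer b = []) :
    step s (Action.retrieve b) = s := by
  simp only [step, h]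

lemma reward_store {s : PSState L W} {b : Fin L} (h : s.upstream ≠ [] ∧ (s.buffer b).length < W) :
    reward s (Action.store b) = 0 := by simp [reward, h]

lemma reward_store_not {s : PSState L W} {b : Fin L}
    (h : ¬ (s.upstream ≠ [] ∧ (s.buffer b).length < W)) :
    reward s (Action.store b) = -10 := by simp only [reward, if_neg h]

lemma reward_retrieve {s : PSState L W} {b : Fin L} {c : ℕ} {rest : List ℕ}
    (h : s.buffer b = c :: rest) :
    reward s (Action.retrieve b) = if s.downstream.getLast? = some c then 1 else 0 := by
  simp only [reward, h]

lemma reward_retrieve_nil {s : PSState L W} {b : Fin L} (h : s.buffer b = []) :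
    reward s (Action.retrieve b) = -10 := by
  simp only [reward, h]

lemma run_cons (s : PSState L W) (x : Action L) (l : List (Action L)) :
    run s (x :: l) = run (step s x) l := rfl

lemma run_append (s : PSState L W) (l1 l2 : List (Action L)) :
    run s (l1 ++ l2) = run (run s l1) l2 := List.foldl_append ..

lemma cumReward_append (s : PSState L W) (l1 l2 : List (Action L)) :
    cumReward s (l1 ++ l2) = cumReward s l1 + cumReward (run s l1) l2 := by
  induction l1 generalizing s with
  | nil => simp [cumReward, run]
  | cons x t ih => simp [cumReward, run_cons, ih, add_assoc]

lemma feasible_append {s : PSState L W} {l1 l2 : List (Action L)} :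
    Feasible s (l1 ++ l2) ↔ Feasible s l1 ∧ Feasible (run s l1) l2 := by
  induction l1 generalizing s with
  | nil => simp [Feasible, run]
  | cons x t ih => simp [Feasible, run_cons, ih, and_assoc]



-- ### equivalence of states with the same upstream and buffer

lemma step_eq_ub {s t : PSState L W} (h1 : s.upstream = t.upstream)
    (h2 : s.buffer = t.buffer) (x : Action L) :
    (step s x).upstream = (step t x).upstream ∧ (step s x).buffer = (step t x).buffer := by
  cases x with
  | store b =>
    by_cases h : s.upstream ≠ [] ∧ (s.buffer b).length < W
    · rw [step_store h, step_store (h1 ▸ h2 ▸ h)]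
      simp [h1, h2]
    · rw [step_store_not h, step_store_not (h1 ▸ h2 ▸ h)]
      exact ⟨h1, h2⟩
  | retrieve b =>
    cases hb : s.buffer b with
    | nil => rw [step_retrieve_nil hb, step_retrieve_nil (h2 ▸ hb)]; exact ⟨h1, h2⟩
    | cons c rest =>
      rw [step_retrieve hb, step_retrieve (h2 ▸ hb)]
      simp [h1, h2]

lemma valid_eq_ub {s t : PSState L W} (h1 : s.upstream = t.upstream)
    (h2 : s.buffer = t.buffer) (x : Action L) : Valid s x ↔ Valid t x := by
  cases x <;> simp [Valid, h1, h2]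

lemma feasible_eq_ub {s t : PSState L W} (h1 : s.upstream = t.upstream)
    (h2 : s.buffer = t.buffer) (acts : List (Action L)) :
    Feasible s acts → Feasible t acts := by
  induction acts generalizing s t with
  | nil => intro; trivial
  | cons x rest ih =>
    rintro ⟨hv, hf⟩
    obtain ⟨g1, g2⟩ := step_eq_ub h1 h2 x
    exact ⟨(valid_eq_ub h1 h2 x).1 hv, ih g1 g2 hf⟩

lemma run_eq_ub {s t : PSState L W} (h1 : s.upstream = t.upstream)
    (h2 : s.buffer = t.buffer) (acts : List (Action L)) :
    (run s acts).upstream = (run t acts).upstream ∧ (run s acts).buffer = (run t acts).buffer := by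
  induction acts generalizing s t with
  | nil => exact ⟨h1, h2⟩
  | cons x rest ih =>
    obtain ⟨g1, g2⟩ := step_eq_ub h1 h2 x
    exact ih g1 g2

-- with equal getLast? of downstream, rewards agree and are preserved

lemma step_eq_last {s t : PSState L W} (h1 : s.upstream = t.upstream)
    (h2 : s.buffer = t.buffer) (h3 : s.downstream.getLast? = t.downstream.getLast?)
    (x : Action L) :
    reward s x = reward t x ∧
      (step s x).downstream.getLast? = (step t x).downstream.getLast? := by
  cases x with
  | store b =>
    by_cases h : s.upstream ≠ [] ∧ (s.buffer b).length < W
    · rw [reward_store h, reward_store (h1 ▸ h2 ▸ h), step_store h, step_store (h1 ▸ h2 ▸ h)]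
      exact ⟨rfl, h3⟩
    · rw [reward_store_not h, reward_store_not (h1 ▸ h2 ▸ h), step_store_not h,
        step_store_not (h1 ▸ h2 ▸ h)]
      exact ⟨rfl, h3⟩
  | retrieve b =>
    cases hb : s.buffer b with
    | nil =>
      rw [reward_retrieve_nil hb, reward_retrieve_nil (h2 ▸ hb), step_retrieve_nil hb,
        step_retrieve_nil (h2 ▸ hb)]
      exact ⟨rfl, h3⟩
    | cons c rest =>
      rw [reward_retrieve hb, reward_retrieve (h2 ▸ hb), step_retrieve hb,
        step_retrieve (h2 ▸ hb), h3]
      simp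

lemma cumReward_eq_ubl {s t : PSState L W} (h1 : s.upstream = t.upstream)
    (h2 : s.buffer = t.buffer) (h3 : s.downstream.getLast? = t.downstream.getLast?)
    (acts : List (Action L)) : cumReward s acts = cumReward t acts := by
  induction acts generalizing s t with
  | nil => rfl
  | cons x rest ih =>
    obtain ⟨g1, g2⟩ := step_eq_ub h1 h2 x
    obtain ⟨hr, g3⟩ := step_eq_last h1 h2 h3 x
    simp only [cumReward, hr, ih g1 g2 g3]

lemma cumReward_ge_ub {s t : PSState L W} (h1 : s.upstream = t.upstream)
    (h2 : s.buffer = t.buffer) (acts : List (Action L)) :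
    cumReward s acts - 1 ≤ cumReward t acts := by
  induction acts generalizing s t with
  | nil => simp [cumReward]
  | cons x rest ih =>
    obtain ⟨g1, g2⟩ := step_eq_ub h1 h2 x
    cases x with
    | store b =>
      have hrw : reward s (Action.store b) = reward t (Action.store b) := by
        by_cases h : s.upstream ≠ [] ∧ (s.buffer b).length < W
        · rw [reward_store h, reward_store (h1 ▸ h2 ▸ h)]
        · rw [reward_store_not h, reward_store_not (h1 ▸ h2 ▸ h)]
      have := ih g1 g2
      simp only [cumReward, hrw]
      omega
    | retrieve b =>
      cases hb : s.buffer b with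
      | nil =>
        have hrw : reward s (Action.retrieve b) = reward t (Action.retrieve b) := by
          rw [reward_retrieve_nil hb, reward_retrieve_nil (h2 ▸ hb)]
        have := ih g1 g2
        simp only [cumReward, hrw]
        omega
      | cons c rest' =>
        -- the stepped states agree also on getLast?, so tails are equal
        have g3 : (step s (Action.retrieve b)).downstream.getLast?
            = (step t (Action.retrieve b)).downstream.getLast? := by
          rw [step_retrieve hb, step_retrieve (h2 ▸ hb)]
          simp
        have heq := cumReward_eq_ubl g1 g2 g3 rest
        have hrs : reward s (Action.retrieve b) ≤ 1 := by
          rw [reward_retrieve hb]; split <;> omega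
        have hrt : (0:ℤ) ≤ reward t (Action.retrieve b) := by
          rw [reward_retrieve (h2 ▸ hb)]; split <;> omega
        simp only [cumReward, heq] at *
        omega


-- ### the parallel-run invariant

def Inv (a : Fin L) (p : ℕ) (D : List ℕ) (t t' : PSState L W) : Prop :=
  t'.upstream = t.upstream ∧
  (∀ b, b ≠ a → t'.buffer b = t.buffer b) ∧
  t.buffer a = p :: t'.buffer a ∧
  ∃ X, t.downstream = D ++ X ∧ t'.downstream = D ++ p :: X

lemma getLast_insert {D X : List ℕ} {p : ℕ} (hD : D.getLast? = some p) :
    (D ++ X).getLast? = (D ++ p :: X).getLast? := by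
  rw [List.getLast?_append, List.getLast?_append, hD,
    show p :: X = [p] ++ X from rfl, List.getLast?_append]
  cases hX : X.getLast? <;> simp [Option.or]

lemma inv_getLast {a : Fin L} {p : ℕ} {D : List ℕ} {t t' : PSState L W}
    (hD : D.getLast? = some p) (h : Inv a p D t t') :
    t.downstream.getLast? = t'.downstream.getLast? := by
  obtain ⟨_, _, _, X, hX, hX'⟩ := h
  rw [hX, hX']
  exact getLast_insert hD

lemma inv_step {a : Fin L} {p : ℕ} {D : List ℕ} (hD : D.getLast? = some p)
    {t t' : PSState L W} (h : Inv a p D t t') (x : Action L)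
    (hx : x ≠ Action.retrieve a) (hv : Valid t x) :
    Valid t' x ∧ reward t' x = reward t x ∧ Inv a p D (step t x) (step t' x) := by
  obtain ⟨hu, hb, ha, X, hX, hX'⟩ := h
  cases x with
  | store b =>
    obtain ⟨hv1, hv2⟩ := hv
    have hlen : (t'.buffer b).length < W := by
      by_cases hba : b = a
      · subst hba
        rw [ha] at hv2
        simp at hv2
        omega
      · rw [hb b hba]; exact hv2
    have hv' : t'.upstream ≠ [] ∧ (t'.buffer b).length < W := ⟨hu ▸ hv1, hlen⟩
    refine ⟨hv', ?_, ?_⟩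
    · rw [reward_store hv', reward_store ⟨hv1, hv2⟩]
    · rw [step_store hv', step_store ⟨hv1, hv2⟩]
      refine ⟨by simp [hu], ?_, ?_, X, by simpa using hX, by simpa using hX'⟩
      · intro d hda
        by_cases hdb : d = b
        · rw [hdb] at hda ⊢
          show Function.update t'.buffer b (t'.buffer b ++ t'.upstream.take 1) b
              = Function.update t.buffer b (t.buffer b ++ t.upstream.take 1) b
          simp only [Function.update_self]
          rw [hb b hda, hu]
        · show Function.update t'.buffer b (t'.buffer b ++ t'.upstream.take 1) d
              = Function.update t.buffer b (t.buffer b ++ t.upstream.take 1) d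
          rw [Function.update_of_ne hdb, Function.update_of_ne hdb]
          exact hb d hda
      · show Function.update t.buffer b (t.buffer b ++ t.upstream.take 1) a
            = p :: Function.update t'.buffer b (t'.buffer b ++ t'.upstream.take 1) a
        by_cases hba : b = a
        · rw [hba] at *
          simp only [Function.update_self]
          rw [ha, hu]
          rfl
        · rw [Function.update_of_ne (fun h => hba h.symm),
            Function.update_of_ne (fun h => hba h.symm)]
          exact ha
  | retrieve b =>
    have hba : b ≠ a := fun h => hx (h ▸ rfl)
    have hbb : t'.buffer b = t.buffer b := hb b hba
    cases hcb : t.buffer b with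
    | nil => exact absurd hcb hv
    | cons c rest =>
      have hcb' : t'.buffer b = c :: rest := hbb.trans hcb
      have hlast : t.downstream.getLast? = t'.downstream.getLast? := by
        rw [hX, hX']; exact getLast_insert hD
      refine ⟨by rw [Valid, hcb']; simp, ?_, ?_⟩
      · rw [reward_retrieve hcb', reward_retrieve hcb, hlast]
      · rw [step_retrieve hcb', step_retrieve hcb]
        refine ⟨hu, ?_, ?_, X ++ [c], by simp [hX], by simp [hX']⟩
        · intro d hda
          by_cases hdb : d = b
          · subst hdb; simp [Function.update_self]
          · simp [Function.update_of_ne hdb, hb d hda]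
        · simp [Function.update_of_ne (Ne.symm hba), ha]

lemma inv_run {a : Fin L} {p : ℕ} {D : List ℕ} (hD : D.getLast? = some p) :
    ∀ (pre : List (Action L)) (t t' : PSState L W), Inv a p D t t' →
      Feasible t pre → Action.retrieve a ∉ pre →
      Feasible t' pre ∧ cumReward t' pre = cumReward t pre ∧
        Inv a p D (run t pre) (run t' pre) := by
  intro pre
  induction pre with
  | nil => exact fun t t' h _ _ => ⟨trivial, rfl, h⟩
  | cons x rest ih =>
    intro t t' h hf hm
    have hx : x ≠ Action.retrieve a := fun he => hm (he ▸ List.mem_cons_self)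
    obtain ⟨hv', hr, h'⟩ := inv_step hD h x hx hf.1
    obtain ⟨f2, r2, i2⟩ := ih (step t x) (step t' x) h' hf.2
      (fun hmem => hm (List.mem_cons_of_mem x hmem))
    exact ⟨⟨hv', f2⟩, by simp only [cumReward, hr, r2], i2⟩

-- ### structural lemmas

lemma buffer_grow (a : Fin L) :
    ∀ (acts : List (Action L)) (t : PSState L W), Action.retrieve a ∉ acts →
      ∃ l, (run t acts).buffer a = t.buffer a ++ l := by
  intro acts
  induction acts with
  | nil => exact fun t _ => ⟨[], by simp [run]⟩
  | cons x rest ih =>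
    intro t hm
    have hx : x ≠ Action.retrieve a := fun he => hm (he ▸ List.mem_cons_self)
    obtain ⟨l, hl⟩ := ih (step t x) (fun hmem => hm (List.mem_cons_of_mem x hmem))
    rw [run_cons] at *
    have : ∃ l', (step t x).buffer a = t.buffer a ++ l' := by
      cases x with
      | store b =>
        by_cases h : t.upstream ≠ [] ∧ (t.buffer b).length < W
        · rw [step_store h]
          by_cases hba : b = a
          · subst hba; exact ⟨t.upstream.take 1, by simp [Function.update_self]⟩
          · exact ⟨[], by simp [Function.update_of_ne (fun he => hba he.symm)]⟩
        · rw [step_store_not h]; exact ⟨[], by simp⟩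
      | retrieve b =>
        have hba : b ≠ a := fun h => hx (h ▸ rfl)
        cases hcb : t.buffer b with
        | nil => rw [step_retrieve_nil hcb]; exact ⟨[], by simp⟩
        | cons c r =>
          rw [step_retrieve hcb]
          exact ⟨[], by simp [Function.update_of_ne (Ne.symm hba)]⟩
    obtain ⟨l', hl'⟩ := this
    exact ⟨l' ++ l, by rw [hl, hl', List.append_assoc]⟩

lemma first_split {α : Type*} [DecidableEq α] {x : α} :
    ∀ {l : List α}, x ∈ l → ∃ l1 l2, l = l1 ++ x :: l2 ∧ x ∉ l1 := by
  intro l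
  induction l with
  | nil => intro h; exact absurd h (List.not_mem_nil)
  | cons y ys ih =>
    intro h
    by_cases hxy : x = y
    · exact ⟨[], ys, by simp [hxy], List.not_mem_nil⟩
    · have : x ∈ ys := by
        rcases List.mem_cons.1 h with h' | h'
        · exact absurd h' hxy
        · exact h'
      obtain ⟨l1, l2, h1, h2⟩ := ih this
      exact ⟨y :: l1, l2, by simp [h1], by simp [hxy, h2]⟩


/-- A greedy retrieval followed by an optimal continuation loses nothing: if lane
`a`'s front car has the color `p` of the current downstream color in state `s`,
then retrieving from lane `a` yields reward `1`, and the maximum cumulative reward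
over completing sequences from `s` equals `1` plus the maximum cumulative reward
over completing sequences from the successor state. -/
theorem greedy_retrieval_loses_nothing {L W : ℕ} (s : PSState L W) (a : Fin L) (p : ℕ)
    (hp : s.downstream.getLast? = some p) (hfront : (s.buffer a).head? = some p) :
    reward s (Action.retrieve a) = 1 ∧
    ∀ M : ℤ,
      IsGreatest {r : ℤ | ∃ acts : List (Action L),
        Feasible (step s (Action.retrieve a)) acts ∧
        Complete (step s (Action.retrieve a)) acts ∧
        cumReward (step s (Action.retrieve a)) acts = r} M →
      IsGreatest {r : ℤ | ∃ acts : List (Action L),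
        Feasible s acts ∧ Complete s acts ∧ cumReward s acts = r} (1 + M) := by
  obtain ⟨q, hq⟩ : ∃ q, s.buffer a = p :: q := by
    cases h : s.buffer a with
    | nil => rw [h] at hfront; simp at hfront
    | cons c r =>
      rw [h] at hfront
      simp only [List.head?_cons, Option.some.injEq] at hfront
      exact ⟨r, by rw [hfront]⟩
  have hrw : reward s (Action.retrieve a) = 1 := by
    rw [reward_retrieve hq, if_pos hp]
  have hs' : step s (Action.retrieve a) =
      { s with buffer := Function.update s.buffer a q,
               downstream := s.downstream ++ [p] } := step_retrieve hq
  refine ⟨hrw, ?_⟩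
  rintro M ⟨⟨actsM, hfM, hcM, hrM⟩, hub⟩
  constructor
  · -- membership : the greedy action followed by the optimal continuation
    refine ⟨Action.retrieve a :: actsM, ⟨by rw [Valid, hq]; simp, hfM⟩, hcM, ?_⟩
    simp only [cumReward, hrw, hrM]
  · -- upper bound
    rintro r ⟨acts, hf, hc, rfl⟩
    have hmem : Action.retrieve a ∈ acts := by
      by_contra hm
      obtain ⟨l, hl⟩ := buffer_grow a acts s hm
      have h2 := hc.2 a
      rw [hl, hq] at h2
      simp at h2
    obtain ⟨pre, post, rfl, hpre⟩ := first_split hmem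
    have hInv : Inv a p s.downstream s (step s (Action.retrieve a)) := by
      rw [hs']
      refine ⟨rfl, fun b hba => Function.update_of_ne hba _ _, ?_, [], by simp, by simp⟩
      show s.buffer a = p :: Function.update s.buffer a q a
      rw [Function.update_self, hq]
    obtain ⟨hfpre, hvu, hfpost⟩ :
        Feasible s pre ∧ Valid (run s pre) (Action.retrieve a) ∧
          Feasible (step (run s pre) (Action.retrieve a)) post := by
      have h := feasible_append.1 hf
      exact ⟨h.1, h.2.1, h.2.2⟩
    obtain ⟨hfpre', hcre, hIuv⟩ :=
      inv_run hp pre s (step s (Action.retrieve a)) hInv hfpre hpre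
    obtain ⟨hu, hb, ha, X, hX, hX'⟩ := hIuv
    have hv : step (run s pre) (Action.retrieve a) =
        { run s pre with
            buffer := Function.update (run s pre).buffer a
              ((run (step s (Action.retrieve a)) pre).buffer a),
            downstream := (run s pre).downstream ++ [p] } := step_retrieve ha
    have hv1 : (step (run s pre) (Action.retrieve a)).upstream
        = (run (step s (Action.retrieve a)) pre).upstream := by
      rw [hv]; exact hu.symm
    have hv2 : (step (run s pre) (Action.retrieve a)).buffer
        = (run (step s (Action.retrieve a)) pre).buffer := by
      funext d
      rw [hv]
      show Function.update (run s pre).buffer a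
          ((run (step s (Action.retrieve a)) pre).buffer a) d = _
      by_cases hda : d = a
      · rw [hda, Function.update_self]
      · rw [Function.update_of_ne hda]; exact (hb d hda).symm
    have hcum : cumReward s (pre ++ Action.retrieve a :: post)
        = cumReward s pre + reward (run s pre) (Action.retrieve a)
          + cumReward (step (run s pre) (Action.retrieve a)) post := by
      rw [cumReward_append]; simp only [cumReward]; ring
    have hra : reward (run s pre) (Action.retrieve a)
        = if (run s pre).downstream.getLast? = some p then 1 else 0 := reward_retrieve ha
    have hfeas' : Feasible (step s (Action.retrieve a)) (pre ++ post) :=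
      feasible_append.2 ⟨hfpre', feasible_eq_ub hv1 hv2 post hfpost⟩
    have hcomp' : Complete (step s (Action.retrieve a)) (pre ++ post) := by
      obtain ⟨g1, g2⟩ := run_eq_ub hv1 hv2 post
      have hrun : run s (pre ++ Action.retrieve a :: post)
          = run (step (run s pre) (Action.retrieve a)) post := by
        rw [run_append, run_cons]
      have hc1 := hc.1
      have hc2 := hc.2
      rw [hrun] at hc1
      constructor
      · rw [run_append, ← g1]; exact hc1
      · intro b
        have := hc2 b
        rw [hrun] at this
        rw [run_append, ← congrFun g2 b]
        exact this
    have hM : cumReward (step s (Action.retrieve a)) (pre ++ post) ≤ M :=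
      hub ⟨pre ++ post, hfeas', hcomp', rfl⟩
    have hsum' : cumReward (step s (Action.retrieve a)) (pre ++ post)
        = cumReward s pre + cumReward (run (step s (Action.retrieve a)) pre) post := by
      rw [cumReward_append, hcre]
    by_cases hlast : (run s pre).downstream.getLast? = some p
    · have hlasteq : (run s pre).downstream.getLast?
          = (run (step s (Action.retrieve a)) pre).downstream.getLast? := by
        rw [hX, hX']; exact getLast_insert hp
      have hvlast : (step (run s pre) (Action.retrieve a)).downstream.getLast? = some p := by
        rw [hv]; exact List.getLast?_concat
      have hce : cumReward (step (run s pre) (Action.retrieve a)) post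
          = cumReward (run (step s (Action.retrieve a)) pre) post :=
        cumReward_eq_ubl hv1 hv2 (by rw [hvlast, ← hlasteq, hlast]) post
      rw [hra, if_pos hlast] at hcum
      rw [hcum, hce]
      linarith [hsum' ▸ hM]
    · rw [hra, if_neg hlast] at hcum
      have hge := cumReward_ge_ub hv1 hv2 post
      rw [hcum]
      linarith [hsum' ▸ hM, hge]


end PS
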